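/- Let d(u,v) = min(|u−v|, 1−|u−v|) denote the periodic distance on [0,1]. Suppose 0 ≤ r_d ≤ r_s ≤ 2r_d and r_s ≤ 1/4. Then for every x ∈ [0,1], the integral over (y,z) ∈ [0,1]² (with respect to Lebesgue measure) of 1[d(x,y) ≤ r_s]·1[d(x,z) ≤ r_d]·1[d(y,z) ≤ r_d] equals 4 r_s r_d − r_s². (This is the mixed-triangle probability in the geometric block model conditioned on the location of one of the two vertices belonging to the same community, in the regime r_d ≤ r_s < 2r_d.) -/
import Mathlib


open MeasureTheory

noncomputable section

/-- The periodic distance on `[0,1]`: `d(u,v) = min(|u-v|, 1-|u-v|)`. -/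
def pdist (u v : ℝ) : ℝ := min |u - v| (1 - |u - v|)

lemma pdist_abs {u v u' v' : ℝ} (h : |u - v| = |u' - v'|) : pdist u v = pdist u' v' := by
  unfold pdist; rw [h]

lemma pdist_zero {w : ℝ} (h0 : 0 ≤ w) : pdist 0 w = min w (1 - w) := by
  unfold pdist; rw [zero_sub, abs_neg, abs_of_nonneg h0]

lemma continuous_pdist2 : Continuous (fun p : ℝ × ℝ => pdist p.1 p.2) := by
  unfold pdist; fun_prop

lemma pdist_fract' (t : ℝ) (h : |t| ≤ 1) : pdist 0 (Int.fract t) = min |t| (1 - |t|) := by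
  rcases le_or_gt 0 t with h0 | h0
  · rcases eq_or_lt_of_le (abs_le.mp h).2 with h1 | h1
    · subst h1
      rw [Int.fract_one, pdist_zero le_rfl]
      norm_num
    · rw [Int.fract_eq_self.mpr ⟨h0, h1⟩, pdist_zero h0, abs_of_nonneg h0]
  · have hge : -1 ≤ t := (abs_le.mp h).1
    have hf : Int.fract t = t + 1 := by
      have hfl : ⌊t⌋ = -1 := by
        rw [Int.floor_eq_iff]
        constructor <;> push_cast <;> linarith
      rw [Int.fract, hfl]; push_cast; ring
    rw [hf, pdist_zero (by linarith), abs_of_neg h0]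
    rw [min_comm]
    ring_nf

lemma pdist_fract (u v : ℝ) (h : |v - u| ≤ 1) : pdist 0 (Int.fract (v - u)) = pdist u v := by
  rw [pdist_fract' _ h]
  unfold pdist
  rw [abs_sub_comm u v]

lemma fract_sub_fract (a b : ℝ) : Int.fract (Int.fract a - Int.fract b) = Int.fract (a - b) := by
  have h1 : Int.fract a - Int.fract b = (a - b) - ((⌊a⌋ - ⌊b⌋ : ℤ) : ℝ) := by
    rw [Int.fract, Int.fract]; push_cast; ring
  rw [h1, Int.fract_sub_intCast]

noncomputable def chi (r a t : ℝ) : ℝ := if pdist a t ≤ r then 1 else 0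

lemma chi_nonneg (r a t : ℝ) : 0 ≤ chi r a t := by unfold chi; positivity

lemma chi_le_one (r a t : ℝ) : chi r a t ≤ 1 := by
  unfold chi; split <;> norm_num

lemma abs_chi_le (r a t : ℝ) : |chi r a t| ≤ 1 := by
  rw [abs_of_nonneg (chi_nonneg r a t)]; exact chi_le_one r a t

lemma measurable_chi (r a : ℝ) : Measurable (chi r a) := by
  unfold chi
  apply Measurable.ite _ measurable_const measurable_const
  exact measurableSet_le (by unfold pdist; fun_prop) measurable_const

lemma chi_eq_one {r a t : ℝ} (h : pdist a t ≤ r) : chi r a t = 1 := if_pos h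
lemma chi_eq_zero {r a t : ℝ} (h : r < pdist a t) : chi r a t = 0 := if_neg (not_le.mpr h)

/-- generic interval integrability from measurable + bounded on the interval -/
lemma II_of_bdd {f : ℝ → ℝ} (hf : Measurable f) (C : ℝ) {a b : ℝ}
    (h : ∀ t ∈ Set.uIoc a b, |f t| ≤ C) : IntervalIntegrable f volume a b := by
  apply IntervalIntegrable.mono_fun' (g := fun _ => C) intervalIntegrable_const
    hf.aestronglyMeasurable
  exact ae_restrict_of_forall_mem measurableSet_uIoc h

lemma ae_ne_pt (a : ℝ) : ∀ᵐ x : ℝ, x ≠ a := by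
  rw [MeasureTheory.ae_iff]
  simpa using measure_singleton (α := ℝ) a

set_option maxHeartbeats 1000000 in
/-- Translation lemma on the unit interval -/
lemma translation_lemma {f : ℝ → ℝ} (hf : Measurable f) (C : ℝ)
    (hb : ∀ t ∈ Set.Icc (0:ℝ) 1, |f t| ≤ C) {x : ℝ} (hx : x ∈ Set.Icc (0:ℝ) 1) :
    ∫ z in (0:ℝ)..1, f (Int.fract (z - x)) = ∫ z in (0:ℝ)..1, f z := by
  obtain ⟨hx0, hx1⟩ := hx
  have hfr : ∀ z : ℝ, Int.fract (z - x) ∈ Set.Icc (0:ℝ) 1 :=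
    fun z => ⟨Int.fract_nonneg _, (Int.fract_lt_one _).le⟩
  have hmc : Measurable fun z => f (Int.fract (z - x)) :=
    hf.comp (measurable_fract.comp (measurable_id.sub measurable_const))
  have hIIc : ∀ a b : ℝ, IntervalIntegrable (fun z => f (Int.fract (z - x))) volume a b :=
    fun a b => II_of_bdd hmc C (fun t _ => hb _ (hfr t))
  have hIIf : ∀ a b : ℝ, a ∈ Set.Icc (0:ℝ) 1 → b ∈ Set.Icc (0:ℝ) 1 →
      IntervalIntegrable f volume a b := by
    intro a b ha hb'
    apply II_of_bdd hf C
    intro t ht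
    exact hb t (Set.uIcc_subset_Icc ha hb' (Set.uIoc_subset_uIcc ht))
  rw [← intervalIntegral.integral_add_adjacent_intervals (hIIc 0 x) (hIIc x 1)]
  have h1 : ∫ z in (0:ℝ)..x, f (Int.fract (z - x)) = ∫ z in (1-x:ℝ)..1, f z := by
    have he : ∫ z in (0:ℝ)..x, f (Int.fract (z - x)) = ∫ z in (0:ℝ)..x, f (z + (1 - x)) := by
      apply intervalIntegral.integral_congr_ae
      filter_upwards [ae_ne_pt x] with z hz hzm
      rw [Set.uIoc_of_le hx0] at hzm
      have hz1 : 0 < z := hzm.1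
      have hz2 : z < x := lt_of_le_of_ne hzm.2 hz
      have hfr2 : Int.fract (z - x) = z + (1 - x) := by
        have hfl : ⌊z - x⌋ = -1 := by
          have : ((-1 : ℤ) : ℝ) ≤ z - x ∧ z - x < (-1 : ℤ) + 1 := by
            constructor <;> push_cast <;> linarith
          exact Int.floor_eq_iff.mpr this
        rw [Int.fract, hfl]; push_cast; ring
      rw [hfr2]
    rw [he, intervalIntegral.integral_comp_add_right]
    norm_num
  have h2 : ∫ z in x..(1:ℝ), f (Int.fract (z - x)) = ∫ z in (0:ℝ)..(1-x), f z := by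
    have he2 : ∫ z in x..(1:ℝ), f (Int.fract (z - x)) = ∫ z in x..(1:ℝ), f (z - x) := by
      apply intervalIntegral.integral_congr_ae
      filter_upwards [ae_ne_pt 1] with z hz hzm
      rw [Set.uIoc_of_le hx1] at hzm
      have hz2 : z < 1 := lt_of_le_of_ne hzm.2 hz
      have hfr2 : Int.fract (z - x) = z - x := by
        apply Int.fract_eq_self.mpr
        constructor
        · linarith [hzm.1]
        · linarith
      rw [hfr2]
    rw [he2, intervalIntegral.integral_comp_sub_right]
    norm_num
  rw [h1, h2]
  rw [← intervalIntegral.integral_add_adjacent_intervals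
    (hIIf 0 (1-x) (by constructor <;> linarith) (by constructor <;> linarith))
    (hIIf (1-x) 1 (by constructor <;> linarith) (by constructor <;> norm_num))]
  ring_nf

lemma chi_one_near {r a t : ℝ} (h1 : a - t ≤ r) (h2 : t - a ≤ r) : chi r a t = 1 := by
  unfold chi
  rw [if_pos]
  exact le_trans (min_le_left _ _) (abs_sub_le_iff.mpr ⟨h1, h2⟩)

lemma chi_one_far {r a t : ℝ} (h : 1 - r ≤ a - t ∨ 1 - r ≤ t - a) : chi r a t = 1 := by
  unfold chi
  rw [if_pos]
  have habs : 1 - r ≤ |a - t| := by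
    rcases h with h | h
    · exact le_trans h (le_abs_self _)
    · rw [abs_sub_comm]; exact le_trans h (le_abs_self _)
  exact le_trans (min_le_right _ _) (by linarith)

lemma chi_zero_mid {r a t : ℝ} (h1 : r < a - t ∨ r < t - a) (h2 : a - t < 1 - r)
    (h3 : t - a < 1 - r) : chi r a t = 0 := by
  unfold chi
  rw [if_neg]
  rw [not_le]
  apply lt_min
  · rcases h1 with h | h
    · exact lt_of_lt_of_le h (le_abs_self _)
    · exact lt_of_lt_of_le h (by rw [abs_sub_comm]; exact le_abs_self _)
  · have := abs_sub_lt_iff.mpr ⟨h2, h3⟩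
    linarith

lemma G0 {rd : ℝ} (hrd0 : 0 ≤ rd) (hrd : rd ≤ 1/4) {u : ℝ} (hu0 : 0 ≤ u) (hu1 : u ≤ 1)
    (hu2 : u ≤ 2*rd) :
    ∫ w in (0:ℝ)..1, chi rd 0 w * chi rd u w = 2*rd - u := by
  have hm : Measurable fun w => chi rd 0 w * chi rd u w :=
    (measurable_chi rd 0).mul (measurable_chi rd u)
  have hII : ∀ a b : ℝ, IntervalIntegrable (fun w => chi rd 0 w * chi rd u w) volume a b := by
    intro a b
    apply II_of_bdd hm 1
    intro t _
    rw [abs_mul]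
    have h1 := abs_chi_le rd 0 t
    have h2 := abs_chi_le rd u t
    nlinarith [abs_nonneg (chi rd 0 t), abs_nonneg (chi rd u t)]
  rcases le_or_gt u rd with hc | hc
  · -- case u ≤ rd : pieces 0, rd, u+1-rd, 1
    have e1 : ∫ w in (0:ℝ)..rd, chi rd 0 w * chi rd u w = rd := by
      rw [intervalIntegral.integral_congr (g := fun _ => (1:ℝ)) ?_, intervalIntegral.integral_const]
      · simp
      · intro w hw
        rw [Set.uIcc_of_le hrd0] at hw
        obtain ⟨hw0, hw1⟩ := hw
        show chi rd 0 w * chi rd u w = (1:ℝ)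
        rw [chi_one_near (by linarith) (by linarith), chi_one_near (by linarith) (by linarith)]
        norm_num
    have e2 : ∫ w in rd..(u+1-rd), chi rd 0 w * chi rd u w = 0 := by
      have he : ∫ w in rd..(u+1-rd), chi rd 0 w * chi rd u w = ∫ _ in rd..(u+1-rd), (0:ℝ) := by
        apply intervalIntegral.integral_congr_ae
        filter_upwards [ae_ne_pt (u+1-rd)] with w hw hwm
        rw [Set.uIoc_of_le (by linarith)] at hwm
        obtain ⟨hw1, hw2'⟩ := hwm
        have hw2 : w < u+1-rd := lt_of_le_of_ne hw2' hw
        rcases lt_or_ge w (1-rd) with hcc | hcc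
        · rw [chi_zero_mid (a := 0) (Or.inr (by linarith)) (by linarith) (by linarith), zero_mul]
        · rw [chi_zero_mid (a := u) (Or.inr (by linarith)) (by linarith) (by linarith), mul_zero]
      rw [he, intervalIntegral.integral_const]
      simp
    have e3 : ∫ w in (u+1-rd)..(1:ℝ), chi rd 0 w * chi rd u w = rd - u := by
      rw [intervalIntegral.integral_congr (g := fun _ => (1:ℝ)) ?_, intervalIntegral.integral_const]
      · rw [smul_eq_mul]; ring
      · intro w hw
        rw [Set.uIcc_of_le (by linarith)] at hw
        obtain ⟨hw0, hw1⟩ := hw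
        show chi rd 0 w * chi rd u w = (1:ℝ)
        rw [chi_one_far (a := 0) (Or.inr (by linarith)), chi_one_far (a := u) (Or.inr (by linarith))]
        norm_num
    rw [← intervalIntegral.integral_add_adjacent_intervals (hII 0 rd) (hII rd 1),
      ← intervalIntegral.integral_add_adjacent_intervals (hII rd (u+1-rd)) (hII (u+1-rd) 1),
      e1, e2, e3]
    ring
  · -- case rd < u ≤ 2rd : pieces 0, u-rd, rd, 1
    have e1 : ∫ w in (0:ℝ)..(u-rd), chi rd 0 w * chi rd u w = 0 := by
      have he : ∫ w in (0:ℝ)..(u-rd), chi rd 0 w * chi rd u w = ∫ _ in (0:ℝ)..(u-rd), (0:ℝ) := by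
        apply intervalIntegral.integral_congr_ae
        filter_upwards [ae_ne_pt (u-rd)] with w hw hwm
        rw [Set.uIoc_of_le (by linarith)] at hwm
        obtain ⟨hw1, hw2'⟩ := hwm
        have hw2 : w < u-rd := lt_of_le_of_ne hw2' hw
        rw [chi_zero_mid (a := u) (Or.inl (by linarith)) (by linarith) (by linarith), mul_zero]
      rw [he, intervalIntegral.integral_const]
      simp
    have e2 : ∫ w in (u-rd)..rd, chi rd 0 w * chi rd u w = 2*rd - u := by
      rw [intervalIntegral.integral_congr (g := fun _ => (1:ℝ)) ?_, intervalIntegral.integral_const]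
      · rw [smul_eq_mul]; ring
      · intro w hw
        rw [Set.uIcc_of_le (by linarith)] at hw
        obtain ⟨hw0, hw1⟩ := hw
        show chi rd 0 w * chi rd u w = (1:ℝ)
        rw [chi_one_near (by linarith) (by linarith), chi_one_near (by linarith) (by linarith)]
        norm_num
    have e3 : ∫ w in rd..(1:ℝ), chi rd 0 w * chi rd u w = 0 := by
      have he : ∫ w in rd..(1:ℝ), chi rd 0 w * chi rd u w = ∫ _ in rd..(1:ℝ), (0:ℝ) := by
        apply intervalIntegral.integral_congr_ae
        filter_upwards [ae_ne_pt (u+rd)] with w hw hwm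
        rw [Set.uIoc_of_le (by linarith)] at hwm
        obtain ⟨hw1, hw2⟩ := hwm
        rcases lt_or_ge w (1-rd) with hcc | hcc
        · rw [chi_zero_mid (a := 0) (Or.inr (by linarith)) (by linarith) (by linarith), zero_mul]
        · have hge : rd ≤ w - u := by linarith
          have hne : w - u ≠ rd := fun h => hw (by linarith)
          rw [chi_zero_mid (a := u) (Or.inr (lt_of_le_of_ne hge (Ne.symm hne)))
            (by linarith) (by linarith), mul_zero]
      rw [he, intervalIntegral.integral_const]
      simp
    rw [← intervalIntegral.integral_add_adjacent_intervals (hII 0 (u-rd)) (hII (u-rd) 1),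
      ← intervalIntegral.integral_add_adjacent_intervals (hII (u-rd) rd) (hII rd 1),
      e1, e2, e3]
    ring

lemma Gp {rd : ℝ} (hrd0 : 0 ≤ rd) (hrd : rd ≤ 1/4) {u : ℝ} (hu0 : 0 ≤ u) (hu1 : u ≤ 1)
    (hu : pdist 0 u ≤ 2*rd) :
    ∫ w in (0:ℝ)..1, chi rd 0 w * chi rd u w = 2*rd - pdist 0 u := by
  rw [pdist_zero hu0] at hu ⊢
  rcases le_or_gt u (2*rd) with hc | hc
  · rw [min_eq_left (by linarith)]
    exact G0 hrd0 hrd hu0 hu1 hc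
  · have h1u : 1 - u ≤ 2*rd := by
      rcases min_cases u (1-u) with ⟨hm, _⟩ | ⟨hm, _⟩
      · rw [hm] at hu; linarith
      · rw [hm] at hu; exact hu
    rw [min_eq_right (by linarith)]
    have hsub : ∫ w in (0:ℝ)..1, chi rd 0 w * chi rd u w
        = ∫ w in (0:ℝ)..1, chi rd 0 (1-w) * chi rd u (1-w) := by
      rw [intervalIntegral.integral_comp_sub_left (fun w => chi rd 0 w * chi rd u w) 1]
      norm_num
    rw [hsub]
    have hcongr : ∫ w in (0:ℝ)..1, chi rd 0 (1-w) * chi rd u (1-w)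
        = ∫ w in (0:ℝ)..1, chi rd 0 w * chi rd (1-u) w := by
      apply intervalIntegral.integral_congr
      intro w hw
      rw [Set.uIcc_of_le (by norm_num : (0:ℝ) ≤ 1)] at hw
      obtain ⟨hw0, hw1⟩ := hw
      show chi rd 0 (1-w) * chi rd u (1-w) = chi rd 0 w * chi rd (1-u) w
      congr 1
      · unfold chi
        rw [pdist_zero (by linarith), pdist_zero hw0,
          show (1:ℝ) - (1-w) = w by ring, min_comm]
      · unfold chi
        rw [pdist_abs (u := u) (v := 1-w) (u' := 1-u) (v' := w)
          (by rw [show (1-u) - w = -(u - (1-w)) by ring, abs_neg])]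
    rw [hcongr]
    rw [G0 hrd0 hrd (by linarith) (by linarith) h1u]

lemma inner_int {rd : ℝ} (hrd0 : 0 ≤ rd) (hrd : rd ≤ 1/4) {x y : ℝ}
    (hx : x ∈ Set.Icc (0:ℝ) 1) (hy : y ∈ Set.Icc (0:ℝ) 1) (hxy : pdist x y ≤ 2*rd) :
    ∫ z in Set.Icc (0:ℝ) 1, chi rd x z * chi rd y z = 2*rd - pdist x y := by
  obtain ⟨hx0, hx1⟩ := hx
  obtain ⟨hy0, hy1⟩ := hy
  rw [MeasureTheory.integral_Icc_eq_integral_Ioc,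
    ← intervalIntegral.integral_of_le (by norm_num : (0:ℝ) ≤ 1)]
  set u := Int.fract (y - x) with hud
  have hu0 : 0 ≤ u := Int.fract_nonneg _
  have hu1 : u < 1 := Int.fract_lt_one _
  have hpu : pdist 0 u = pdist x y := pdist_fract x y (abs_le.mpr ⟨by linarith, by linarith⟩)
  have step1 : ∫ z in (0:ℝ)..1, chi rd x z * chi rd y z
      = ∫ z in (0:ℝ)..1, (fun w => chi rd 0 w * chi rd 0 (Int.fract (w - u)))
          (Int.fract (z - x)) := by
    apply intervalIntegral.integral_congr
    intro z hz
    rw [Set.uIcc_of_le (by norm_num : (0:ℝ) ≤ 1)] at hz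
    obtain ⟨hz0, hz1⟩ := hz
    show chi rd x z * chi rd y z
      = chi rd 0 (Int.fract (z - x)) * chi rd 0 (Int.fract (Int.fract (z - x) - u))
    congr 1
    · unfold chi
      rw [pdist_fract x z (abs_le.mpr ⟨by linarith, by linarith⟩)]
    · unfold chi
      rw [hud, fract_sub_fract, show z - x - (y - x) = z - y by ring,
        pdist_fract y z (abs_le.mpr ⟨by linarith, by linarith⟩)]
  rw [step1]
  have hfm : Measurable fun w => chi rd 0 w * chi rd 0 (Int.fract (w - u)) :=
    (measurable_chi rd 0).mul ((measurable_chi rd 0).comp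
      (measurable_fract.comp (measurable_id.sub measurable_const)))
  have step2 := translation_lemma hfm 1 (fun t _ => by
    rw [abs_mul]
    have h1 := abs_chi_le rd 0 t
    have h2 := abs_chi_le rd 0 (Int.fract (t - u))
    nlinarith [abs_nonneg (chi rd 0 t), abs_nonneg (chi rd 0 (Int.fract (t - u)))])
    (⟨hx0, hx1⟩ : x ∈ Set.Icc (0:ℝ) 1)
  rw [step2]
  have step3 : ∫ w in (0:ℝ)..1, chi rd 0 w * chi rd 0 (Int.fract (w - u))
      = ∫ w in (0:ℝ)..1, chi rd 0 w * chi rd u w := by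
    apply intervalIntegral.integral_congr
    intro w hw
    rw [Set.uIcc_of_le (by norm_num : (0:ℝ) ≤ 1)] at hw
    obtain ⟨hw0, hw1⟩ := hw
    show chi rd 0 w * chi rd 0 (Int.fract (w - u)) = chi rd 0 w * chi rd u w
    congr 1
    unfold chi
    rw [pdist_fract u w (abs_le.mpr ⟨by linarith, by linarith⟩)]
  rw [step3, Gp hrd0 hrd hu0 hu1.le (by rw [hpu]; exact hxy), hpu]

lemma outer_int {rs rd : ℝ} (hrs0 : 0 ≤ rs) (hrs : rs ≤ 1/4) (hrd0 : 0 ≤ rd) (hrd : rd ≤ 1/4)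
    {x : ℝ} (hx : x ∈ Set.Icc (0:ℝ) 1) :
    ∫ y in Set.Icc (0:ℝ) 1, chi rs x y * (2*rd - pdist x y) = 4*rs*rd - rs^2 := by
  obtain ⟨hx0, hx1⟩ := hx
  rw [MeasureTheory.integral_Icc_eq_integral_Ioc,
    ← intervalIntegral.integral_of_le (by norm_num : (0:ℝ) ≤ 1)]
  have step1 : ∫ y in (0:ℝ)..1, chi rs x y * (2*rd - pdist x y)
      = ∫ y in (0:ℝ)..1, (fun w => chi rs 0 w * (2*rd - pdist 0 w)) (Int.fract (y - x)) := by
    apply intervalIntegral.integral_congr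
    intro y hy
    rw [Set.uIcc_of_le (by norm_num : (0:ℝ) ≤ 1)] at hy
    obtain ⟨hy0, hy1⟩ := hy
    have habs : |y - x| ≤ 1 := abs_le.mpr ⟨by linarith, by linarith⟩
    show chi rs x y * (2*rd - pdist x y)
      = chi rs 0 (Int.fract (y - x)) * (2*rd - pdist 0 (Int.fract (y - x)))
    rw [pdist_fract x y habs]
    congr 1
    unfold chi
    rw [pdist_fract x y habs]
  rw [step1]
  have hpm : Measurable fun w : ℝ => pdist 0 w := by
    unfold pdist; fun_prop
  have hfm : Measurable fun w => chi rs 0 w * (2*rd - pdist 0 w) :=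
    (measurable_chi rs 0).mul (measurable_const.sub hpm)
  have hbd : ∀ t ∈ Set.Icc (0:ℝ) 1, |chi rs 0 t * (2*rd - pdist 0 t)| ≤ 1 := by
    intro t ht
    obtain ⟨ht0, ht1⟩ := ht
    rw [abs_mul]
    have h1 := abs_chi_le rs 0 t
    have hp : 0 ≤ pdist 0 t := by
      rw [pdist_zero ht0]
      exact le_min ht0 (by linarith)
    have hp2 : pdist 0 t ≤ 1 := by
      rw [pdist_zero ht0]
      exact le_trans (min_le_left _ _) ht1
    have h2 : |2*rd - pdist 0 t| ≤ 1 := abs_le.mpr ⟨by linarith, by linarith⟩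
    nlinarith [abs_nonneg (chi rs 0 t), abs_nonneg (2*rd - pdist 0 t)]
  rw [translation_lemma hfm 1 hbd ⟨hx0, hx1⟩]
  -- now evaluate ∫_0^1 chi rs 0 w * (2rd - pdist 0 w)
  have hII : ∀ a b : ℝ, a ∈ Set.Icc (0:ℝ) 1 → b ∈ Set.Icc (0:ℝ) 1 →
      IntervalIntegrable (fun w => chi rs 0 w * (2*rd - pdist 0 w)) volume a b := by
    intro a b ha hb
    apply II_of_bdd hfm 1
    intro t ht
    exact hbd t (Set.uIcc_subset_Icc ha hb (Set.uIoc_subset_uIcc ht))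
  have e1 : ∫ w in (0:ℝ)..rs, chi rs 0 w * (2*rd - pdist 0 w) = 2*rd*rs - rs^2/2 := by
    have he : ∫ w in (0:ℝ)..rs, chi rs 0 w * (2*rd - pdist 0 w)
        = ∫ w in (0:ℝ)..rs, (2*rd - w) := by
      apply intervalIntegral.integral_congr
      intro w hw
      rw [Set.uIcc_of_le hrs0] at hw
      obtain ⟨hw0, hw1⟩ := hw
      show chi rs 0 w * (2*rd - pdist 0 w) = 2*rd - w
      rw [chi_one_near (by linarith) (by linarith), pdist_zero hw0,
        min_eq_left (by linarith), one_mul]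
    rw [he, intervalIntegral.integral_sub intervalIntegrable_const intervalIntegral.intervalIntegrable_id,
      intervalIntegral.integral_const, integral_id]
    rw [smul_eq_mul]; ring
  have e2 : ∫ w in rs..(1-rs), chi rs 0 w * (2*rd - pdist 0 w) = 0 := by
    have he : ∫ w in rs..(1-rs), chi rs 0 w * (2*rd - pdist 0 w)
        = ∫ _ in rs..(1-rs), (0:ℝ) := by
      apply intervalIntegral.integral_congr_ae
      filter_upwards [ae_ne_pt (1-rs)] with w hw hwm
      rw [Set.uIoc_of_le (by linarith)] at hwm
      obtain ⟨hw1, hw2'⟩ := hwm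
      have hw2 : w < 1-rs := lt_of_le_of_ne hw2' hw
      rw [chi_zero_mid (a := 0) (Or.inr (by linarith)) (by linarith) (by linarith), zero_mul]
    rw [he, intervalIntegral.integral_const]
    simp
  have e3 : ∫ w in (1-rs)..(1:ℝ), chi rs 0 w * (2*rd - pdist 0 w)
      = 2*rd*rs - rs^2/2 := by
    have he : ∫ w in (1-rs)..(1:ℝ), chi rs 0 w * (2*rd - pdist 0 w)
        = ∫ w in (1-rs)..(1:ℝ), ((2*rd - 1) + w) := by
      apply intervalIntegral.integral_congr
      intro w hw
      rw [Set.uIcc_of_le (by linarith)] at hw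
      obtain ⟨hw0, hw1⟩ := hw
      show chi rs 0 w * (2*rd - pdist 0 w) = (2*rd - 1) + w
      rw [chi_one_far (a := 0) (Or.inr (by linarith)), pdist_zero (by linarith),
        min_eq_right (by linarith), one_mul]
      ring
    rw [he, intervalIntegral.integral_add intervalIntegrable_const intervalIntegral.intervalIntegrable_id,
      intervalIntegral.integral_const, integral_id]
    rw [smul_eq_mul]; ring
  rw [← intervalIntegral.integral_add_adjacent_intervals
      (hII 0 rs ⟨le_rfl, by linarith⟩ ⟨hrs0, by linarith⟩)
      (hII rs 1 ⟨hrs0, by linarith⟩ ⟨by norm_num, le_rfl⟩),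
    ← intervalIntegral.integral_add_adjacent_intervals
      (hII rs (1-rs) ⟨hrs0, by linarith⟩ ⟨by linarith, by linarith⟩)
      (hII (1-rs) 1 ⟨by linarith, by linarith⟩ ⟨by norm_num, le_rfl⟩),
    e1, e2, e3]
  ring

/-- Mixed-triangle probability in the geometric block model, conditioned on the
location `x` of one of the two vertices belonging to the same community, in the
regime `r_d ≤ r_s ≤ 2 r_d`: the integral over `(y,z) ∈ [0,1]²` of
`1[d(x,y) ≤ r_s] · 1[d(x,z) ≤ r_d] · 1[d(y,z) ≤ r_d]` equals `4 r_s r_d - r_s²`. -/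
theorem mixed_triangle_prob_same_vertex (rs rd : ℝ) (hrd0 : 0 ≤ rd)
    (hds : rd ≤ rs) (hs2d : rs ≤ 2 * rd) (hs4 : rs ≤ 1 / 4)
    (x : ℝ) (hx : x ∈ Set.Icc (0 : ℝ) 1) :
    (∫ p in Set.Icc (0 : ℝ) 1 ×ˢ Set.Icc (0 : ℝ) 1,
        (if pdist x p.1 ≤ rs then (1 : ℝ) else 0) *
        (if pdist x p.2 ≤ rd then (1 : ℝ) else 0) *
        (if pdist p.1 p.2 ≤ rd then (1 : ℝ) else 0)) = 4 * rs * rd - rs ^ 2 := by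
  have hrd4 : rd ≤ 1/4 := le_trans hds hs4
  have hrs0 : 0 ≤ rs := le_trans hrd0 hds
  show (∫ p in Set.Icc (0 : ℝ) 1 ×ˢ Set.Icc (0 : ℝ) 1,
      chi rs x p.1 * chi rd x p.2 * chi rd p.1 p.2) = 4 * rs * rd - rs ^ 2
  have hFin : IsFiniteMeasure ((volume : Measure ℝ).restrict (Set.Icc (0:ℝ) 1)) := by
    constructor
    rw [Measure.restrict_apply_univ]
    simp [Real.volume_Icc]
  have hmeas : Measurable fun p : ℝ × ℝ => chi rs x p.1 * chi rd x p.2 * chi rd p.1 p.2 := by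
    apply Measurable.mul
    · exact ((measurable_chi rs x).comp measurable_fst).mul
        ((measurable_chi rd x).comp measurable_snd)
    · unfold chi
      exact Measurable.ite
        (measurableSet_le continuous_pdist2.measurable measurable_const)
        measurable_const measurable_const
  have hrw : (volume : Measure (ℝ × ℝ)).restrict (Set.Icc (0:ℝ) 1 ×ˢ Set.Icc (0:ℝ) 1)
      = ((volume : Measure ℝ).restrict (Set.Icc (0:ℝ) 1)).prod
        ((volume : Measure ℝ).restrict (Set.Icc (0:ℝ) 1)) := by
    rw [Measure.prod_restrict, ← Measure.volume_eq_prod]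
  have hint : Integrable (fun p : ℝ × ℝ => chi rs x p.1 * chi rd x p.2 * chi rd p.1 p.2)
      (((volume : Measure ℝ).restrict (Set.Icc (0:ℝ) 1)).prod
        ((volume : Measure ℝ).restrict (Set.Icc (0:ℝ) 1))) := by
    apply Integrable.mono' (g := fun _ => (1:ℝ)) (integrable_const 1)
      hmeas.aestronglyMeasurable
    apply Filter.Eventually.of_forall
    intro p
    rw [Real.norm_eq_abs, abs_mul, abs_mul]
    have h1 := abs_chi_le rs x p.1
    have h2 := abs_chi_le rd x p.2
    have h3 := abs_chi_le rd p.1 p.2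
    have n1 := abs_nonneg (chi rs x p.1)
    have n2 := abs_nonneg (chi rd x p.2)
    have n3 := abs_nonneg (chi rd p.1 p.2)
    have h12 : |chi rs x p.1| * |chi rd x p.2| ≤ 1 := by nlinarith
    have n12 : 0 ≤ |chi rs x p.1| * |chi rd x p.2| := mul_nonneg n1 n2
    nlinarith
  rw [hrw, MeasureTheory.integral_prod _ hint]
  have hIcc : MeasurableSet (Set.Icc (0:ℝ) 1) := measurableSet_Icc
  have step : ∫ y in Set.Icc (0:ℝ) 1, (∫ z in Set.Icc (0:ℝ) 1,
      chi rs x y * chi rd x z * chi rd y z)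
      = ∫ y in Set.Icc (0:ℝ) 1, chi rs x y * (2*rd - pdist x y) := by
    apply MeasureTheory.setIntegral_congr_fun hIcc
    intro y hy
    show (∫ z in Set.Icc (0:ℝ) 1, chi rs x y * chi rd x z * chi rd y z)
      = chi rs x y * (2*rd - pdist x y)
    have : ∀ z : ℝ, chi rs x y * chi rd x z * chi rd y z
        = chi rs x y * (chi rd x z * chi rd y z) := fun z => by ring
    simp_rw [this, MeasureTheory.integral_const_mul]
    by_cases hp : pdist x y ≤ rs
    · rw [inner_int hrd0 hrd4 hx hy (le_trans hp hs2d)]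
    · rw [chi_eq_zero (not_le.mp hp), zero_mul, zero_mul]
  rw [step, outer_int hrs0 hs4 hrd0 hrd4 hx]
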